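/- Let (𝒞,𝒳,𝒟) be a localization triple in an additive category 𝒜 and let 𝒮 be the class of morphisms s of 𝒜 such that R(Q(s̄)) is an isomorphism in (𝒞∩𝒟)/𝒳. Let ℬ be any category and F: 𝒜 → ℬ a functor which takes every element of 𝒮 to an isomorphism. If f, g: A → B are morphisms in 𝒜 such that f̄ = ḡ in 𝒜/𝒳 (i.e. f − g factors through an object of 𝒳), then F(f) = F(g). -/
import Mathlib


open CategoryTheory CategoryTheory.Limits

universe w' w v u

namespace LiHomotopy

variable {𝒜 : Type u} [Category.{v} 𝒜] [Preadditive 𝒜] [HasZeroObject 𝒜]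
  [HasBinaryBiproducts 𝒜]

/-- `f` factors through an object belonging to `X`. -/
def FactorsThruSet (X : Set 𝒜) {A B : 𝒜} (f : A ⟶ B) : Prop :=
  ∃ (M : 𝒜) (_ : M ∈ X) (u : A ⟶ M) (v : M ⟶ B), f = u ≫ v

/-- A localization triple `(C, X, D)` in an additive category `𝒜`, consisting of
full additive subcategories `X ⊆ C ∩ D` together with the chosen approximation
sequences of Definition 3.2. -/
structure LocalizationTriple (C X D : Set 𝒜) where
  X_sub_C : X ⊆ C
  X_sub_D : X ⊆ D
  C_zero : ∀ Z : 𝒜, IsZero Z → Z ∈ C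
  C_sum : ∀ {M N : 𝒜}, M ∈ C → N ∈ C → (M ⊞ N) ∈ C
  X_zero : ∀ Z : 𝒜, IsZero Z → Z ∈ X
  X_sum : ∀ {M N : 𝒜}, M ∈ X → N ∈ X → (M ⊞ N) ∈ X
  D_zero : ∀ Z : 𝒜, IsZero Z → Z ∈ D
  D_sum : ∀ {M N : 𝒜}, M ∈ D → N ∈ D → (M ⊞ N) ∈ D
  /-- the chosen `C`-precover `Q(A) → A` -/
  Qobj : 𝒜 → 𝒜
  Wl : 𝒜 → 𝒜
  r : ∀ A : 𝒜, Qobj A ⟶ A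
  ω : ∀ A : 𝒜, Wl A ⟶ Qobj A
  Qobj_mem : ∀ A : 𝒜, Qobj A ∈ C
  r_precover : ∀ (A C' : 𝒜), C' ∈ C → ∀ g : C' ⟶ A, ∃ h : C' ⟶ Qobj A, h ≫ r A = g
  ω_r : ∀ A : 𝒜, ω A ≫ r A = 0
  ω_weakKernel : ∀ (A T : 𝒜) (g : T ⟶ Qobj A), g ≫ r A = 0 → ∃ h : T ⟶ Wl A, h ≫ ω A = g
  Wl_perp : ∀ (A C' : 𝒜), C' ∈ C → ∀ g : C' ⟶ Wl A, FactorsThruSet X g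
  /-- the chosen `D`-preenvelope `A → R(A)` -/
  Robj : 𝒜 → 𝒜
  Wr : 𝒜 → 𝒜
  j : ∀ A : 𝒜, A ⟶ Robj A
  τ : ∀ A : 𝒜, Robj A ⟶ Wr A
  Robj_mem : ∀ A : 𝒜, Robj A ∈ D
  j_preenvelope : ∀ (A D' : 𝒜), D' ∈ D → ∀ g : A ⟶ D', ∃ h : Robj A ⟶ D', j A ≫ h = g
  j_τ : ∀ A : 𝒜, j A ≫ τ A = 0
  τ_weakCokernel : ∀ (A T : 𝒜) (g : Robj A ⟶ T), j A ≫ g = 0 → ∃ h : Wr A ⟶ T, τ A ≫ h = g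
  Wr_perp : ∀ (A D' : 𝒜), D' ∈ D → ∀ g : Wr A ⟶ D', FactorsThruSet X g
  Qobj_mem_of_D : ∀ A : 𝒜, A ∈ D → Qobj A ∈ C ∩ D
  Robj_mem_of_C : ∀ A : 𝒜, A ∈ C → Robj A ∈ C ∩ D

/-- The class `𝒮` of morphisms `s` such that `R(Q(s̄))` is an isomorphism in the
stable category of `C ∩ D` modulo `X`, expressed via representatives. -/
def SClass {C X D : Set 𝒜} (L : LocalizationTriple C X D) : MorphismProperty 𝒜 :=
  fun A B s =>
    ∃ (sc : L.Qobj A ⟶ L.Qobj B) (sf : L.Robj (L.Qobj A) ⟶ L.Robj (L.Qobj B)),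
      sc ≫ L.r B = L.r A ≫ s ∧
      L.j (L.Qobj A) ≫ sf = sc ≫ L.j (L.Qobj B) ∧
      ∃ g : L.Robj (L.Qobj B) ⟶ L.Robj (L.Qobj A),
        FactorsThruSet X (sf ≫ g - 𝟙 _) ∧ FactorsThruSet X (g ≫ sf - 𝟙 _)

lemma fts_comp_left {X : Set 𝒜} {A B C' : 𝒜} (e : A ⟶ B) {f : B ⟶ C'}
    (h : FactorsThruSet X f) : FactorsThruSet X (e ≫ f) := by
  obtain ⟨M, hM, u, v, huv⟩ := h
  exact ⟨M, hM, e ≫ u, v, by rw [huv, Category.assoc]⟩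

lemma fts_comp_right {X : Set 𝒜} {A B C' : 𝒜} {f : A ⟶ B} (e : B ⟶ C')
    (h : FactorsThruSet X f) : FactorsThruSet X (f ≫ e) := by
  obtain ⟨M, hM, u, v, huv⟩ := h
  exact ⟨M, hM, u, v ≫ e, by rw [huv, Category.assoc]⟩

lemma fts_of_through (X : Set 𝒜) {A M B : 𝒜} (hM : M ∈ X) (u : A ⟶ M) (v : M ⟶ B) :
    FactorsThruSet X (u ≫ v) := ⟨M, hM, u, v, rfl⟩

lemma fts_neg {X : Set 𝒜} {A B : 𝒜} {f : A ⟶ B} (h : FactorsThruSet X f) :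
    FactorsThruSet X (-f) := by
  obtain ⟨M, hM, u, v, huv⟩ := h
  exact ⟨M, hM, u, -v, by rw [huv]; simp⟩

lemma fts_zero {C X D : Set 𝒜} (L : LocalizationTriple C X D) {A B : 𝒜} :
    FactorsThruSet X (0 : A ⟶ B) := by
  obtain ⟨Z, hZ⟩ := HasZeroObject.zero (C := 𝒜)
  exact ⟨Z, L.X_zero Z hZ, 0, 0, by simp⟩

lemma fts_add {C X D : Set 𝒜} (L : LocalizationTriple C X D) {A B : 𝒜} {f₁ f₂ : A ⟶ B}
    (h₁ : FactorsThruSet X f₁) (h₂ : FactorsThruSet X f₂) :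
    FactorsThruSet X (f₁ + f₂) := by
  obtain ⟨M, hM, u, v, huv⟩ := h₁
  obtain ⟨N, hN, u', v', huv'⟩ := h₂
  exact ⟨M ⊞ N, L.X_sum hM hN, biprod.lift u u', biprod.desc v v', by
    rw [biprod.lift_desc, ← huv, ← huv']⟩

/-- Lift of a stable equality along the precover `r`. -/
lemma lemA {C X D : Set 𝒜} (L : LocalizationTriple C X D) {P : 𝒜}
    (e : L.Qobj P ⟶ L.Qobj P) (x : P ⟶ P)
    (hcomm : e ≫ L.r P = L.r P ≫ x) (hx : FactorsThruSet X (x - 𝟙 P)) :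
    FactorsThruSet X (e - 𝟙 (L.Qobj P)) := by
  obtain ⟨M, hM, u, v, huv⟩ := hx
  obtain ⟨hh, hhr⟩ := L.r_precover P M (L.X_sub_C hM) v
  have hz : (e - 𝟙 (L.Qobj P) - L.r P ≫ u ≫ hh) ≫ L.r P = 0 := by
    have key : L.r P ≫ (x - 𝟙 P - u ≫ v) = 0 := by
      rw [huv, sub_self, comp_zero]
    simp only [Preadditive.comp_sub, Category.comp_id] at key
    simp only [Preadditive.sub_comp, Category.assoc, hhr, hcomm, Category.id_comp]
    abel_nf
    abel_nf at key
    exact key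
  obtain ⟨k, hk⟩ := L.ω_weakKernel P (L.Qobj P) _ hz
  have hfac : e - 𝟙 (L.Qobj P) = L.r P ≫ u ≫ hh + k ≫ L.ω P := by
    rw [hk]; abel
  rw [hfac]
  exact fts_add L (fts_comp_left (L.r P) (fts_of_through X hM u hh))
    (fts_comp_right (L.ω P) (L.Wl_perp P (L.Qobj P) (L.Qobj_mem P) k))

/-- Lift of a stable equality along the preenvelope `j`. -/
lemma lemB {C X D : Set 𝒜} (L : LocalizationTriple C X D) {Q : 𝒜}
    (e' : L.Robj Q ⟶ L.Robj Q) (e : Q ⟶ Q)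
    (hcomm : L.j Q ≫ e' = e ≫ L.j Q) (he : FactorsThruSet X (e - 𝟙 Q)) :
    FactorsThruSet X (e' - 𝟙 (L.Robj Q)) := by
  obtain ⟨M, hM, u, v, huv⟩ := he
  obtain ⟨uu, huu⟩ := L.j_preenvelope Q M (L.X_sub_D hM) u
  have hz : L.j Q ≫ (e' - 𝟙 (L.Robj Q) - uu ≫ (v ≫ L.j Q)) = 0 := by
    have key : (e - 𝟙 Q - u ≫ v) ≫ L.j Q = 0 := by
      rw [huv, sub_self, zero_comp]
    simp only [Preadditive.sub_comp, Category.assoc, Category.id_comp] at key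
    simp only [Preadditive.comp_sub, Category.comp_id, hcomm]
    rw [← Category.assoc (L.j Q) uu, huu]
    abel_nf
    abel_nf at key
    exact key
  obtain ⟨k, hk⟩ := L.τ_weakCokernel Q (L.Robj Q) _ hz
  have hfac : e' - 𝟙 (L.Robj Q) = uu ≫ (v ≫ L.j Q) + L.τ Q ≫ k := by
    rw [hk]; abel
  rw [hfac]
  exact fts_add L (fts_of_through X hM uu (v ≫ L.j Q))
    (fts_comp_left (L.τ Q) (L.Wr_perp Q (L.Robj Q) (L.Robj_mem Q) k))

lemma fst_mem_SClass {C X D : Set 𝒜} (L : LocalizationTriple C X D) {A M : 𝒜}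
    (hM : M ∈ X) : SClass L (biprod.fst : A ⊞ M ⟶ A) := by
  obtain ⟨sc, hsc⟩ := L.r_precover A (L.Qobj (A ⊞ M)) (L.Qobj_mem _)
    (L.r (A ⊞ M) ≫ biprod.fst)
  obtain ⟨sf, hsf⟩ := L.j_preenvelope (L.Qobj (A ⊞ M)) (L.Robj (L.Qobj A)) (L.Robj_mem _)
    (sc ≫ L.j (L.Qobj A))
  obtain ⟨tc, htc⟩ := L.r_precover (A ⊞ M) (L.Qobj A) (L.Qobj_mem _)
    (L.r A ≫ biprod.inl)
  obtain ⟨tf, htf⟩ := L.j_preenvelope (L.Qobj A) (L.Robj (L.Qobj (A ⊞ M))) (L.Robj_mem _)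
    (tc ≫ L.j (L.Qobj (A ⊞ M)))
  refine ⟨sc, sf, hsc, hsf, tf, ?_, ?_⟩
  · refine lemB L _ (sc ≫ tc) ?_ ?_
    · rw [← Category.assoc, hsf, Category.assoc, htf, ← Category.assoc]
    · refine lemA L _ ((biprod.fst : A ⊞ M ⟶ A) ≫ biprod.inl) ?_ ?_
      · rw [Category.assoc, htc, ← Category.assoc, hsc, Category.assoc]
      · have : (biprod.fst : A ⊞ M ⟶ A) ≫ biprod.inl - 𝟙 (A ⊞ M) =
            -((biprod.snd : A ⊞ M ⟶ M) ≫ biprod.inr) := by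
          rw [← biprod.total]; abel
        rw [this]
        exact fts_neg (fts_of_through X hM _ _)
  · refine lemB L _ (tc ≫ sc) ?_ ?_
    · rw [← Category.assoc, htf, Category.assoc, hsf, ← Category.assoc]
    · refine lemA L _ (𝟙 A) ?_ ?_
      · rw [Category.assoc, hsc, ← Category.assoc, htc, Category.assoc,
          Category.comp_id]
        simp
      · simpa using fts_zero L

theorem map_eq_of_inverts_SClass {C X D : Set 𝒜} (L : LocalizationTriple C X D)
    {ℬ : Type w} [Category.{w'} ℬ] (F : 𝒜 ⥤ ℬ)
    (hF : ∀ ⦃A B : 𝒜⦄ (s : A ⟶ B), SClass L s → IsIso (F.map s))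
    {A B : 𝒜} (f g : A ⟶ B) (h : FactorsThruSet X (f - g)) :
    F.map f = F.map g := by
  obtain ⟨M, hM, u, v, huv⟩ := h
  have hS : IsIso (F.map (biprod.fst : A ⊞ M ⟶ A)) := hF _ (fst_mem_SClass L hM)
  have h1 : F.map (biprod.lift (𝟙 A) u) = F.map (biprod.inl : A ⟶ A ⊞ M) := by
    have hc : F.map (biprod.lift (𝟙 A) u) ≫ F.map (biprod.fst : A ⊞ M ⟶ A) =
        F.map (biprod.inl : A ⟶ A ⊞ M) ≫ F.map (biprod.fst : A ⊞ M ⟶ A) := by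
      rw [← F.map_comp, ← F.map_comp]; simp
    exact (cancel_mono _).mp hc
  have hf : biprod.lift (𝟙 A) u ≫ biprod.desc g v = f := by
    rw [biprod.lift_desc, Category.id_comp, ← huv]; abel
  have hg : (biprod.inl : A ⟶ A ⊞ M) ≫ biprod.desc g v = g := biprod.inl_desc _ _
  calc F.map f = F.map (biprod.lift (𝟙 A) u) ≫ F.map (biprod.desc g v) := by
        rw [← F.map_comp, hf]
    _ = F.map (biprod.inl : A ⟶ A ⊞ M) ≫ F.map (biprod.desc g v) := by rw [h1]
    _ = F.map g := by rw [← F.map_comp, hg]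

end LiHomotopy
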